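/- arXiv:2008.03932 — 5 statements merged into one kernel-verified Lean document; each statement's English description precedes it below -/
import Mathlib

section
/- For every sequence (a_n) of real numbers in [0,1], every ε > 0, and every function g : ℕ → ℕ, there exists N ≤ (g^M)^(⌈1/ε⌉)(0) such that for all s ≤ g(N), a_N ≤ a_s + ε, where g^M(n) := max_{i ≤ n} g(i) and (g^M)^(k) denotes the k-fold iterate of g^M. -/
/-- `iterMax g` is `g^M`, i.e. `g^M(n) = max_{i ≤ n} g(i)`. -/
def iterMax (g : ℕ → ℕ) (n : ℕ) : ℕ := Finset.sup (Finset.range (n+1)) g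

lemma le_iterMax (g : ℕ → ℕ) (n : ℕ) : g n ≤ iterMax g n :=
  Finset.le_sup (Finset.self_mem_range_succ n)

lemma iterMax_mono (g : ℕ → ℕ) : Monotone (iterMax g) := fun m n h =>
  Finset.sup_mono (Finset.range_subset_range.2 (by omega))

theorem stmt0 (a : ℕ → ℝ) (ha : ∀ n, a n ∈ Set.Icc (0:ℝ) 1)
    (ε : ℝ) (hε : 0 < ε) (g : ℕ → ℕ) :
    ∃ N ≤ (iterMax g)^[⌈1/ε⌉₊] 0, ∀ s ≤ g N, a N ≤ a s + ε := by
  by_contra hcon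
  push_neg at hcon
  set k := ⌈1/ε⌉₊ with hk
  have hk1 : 1 ≤ k := Nat.one_le_ceil_iff.2 (by positivity)
  have hkε : 1 ≤ (k : ℝ) * ε := by
    rw [← div_le_iff₀ hε]
    exact Nat.le_ceil _
  -- choice function
  have hch : ∀ N, N ≤ (iterMax g)^[k] 0 → ∃ s, s ≤ g N ∧ a s + ε < a N := by
    intro N hN
    obtain ⟨s, hs1, hs2⟩ := hcon N hN
    exact ⟨s, hs1, by linarith⟩
  classical
  let m : ℕ → ℕ := fun i => Nat.rec 0
    (fun _ p => if h : p ≤ (iterMax g)^[k] 0 then (hch p h).choose else 0) i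
  have key : ∀ i ≤ k, m i ≤ (iterMax g)^[i] 0 ∧ a (m i) + i * ε ≤ a 0 ∧ (1 ≤ i → a (m i) + i * ε < a 0) := by
    intro i hi
    induction i with
    | zero => refine ⟨le_rfl, by simp [m], by omega⟩
    | succ j ih =>
      obtain ⟨h1, h2, _⟩ := ih (by omega)
      have hiter : Monotone fun n => (iterMax g)^[n] 0 :=
        (iterMax_mono g).monotone_iterate_of_le_map (Nat.zero_le _)
      have hle : m j ≤ (iterMax g)^[k] 0 := h1.trans (hiter (by omega))
      have hm : m (j+1) = (hch (m j) hle).choose := by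
        simp only [m, dif_pos hle]
      obtain ⟨hs1, hs2⟩ := (hch (m j) hle).choose_spec
      rw [← hm] at hs1 hs2
      constructor
      · calc m (j+1) ≤ g (m j) := hs1
          _ ≤ iterMax g (m j) := le_iterMax g _
          _ ≤ iterMax g ((iterMax g)^[j] 0) := iterMax_mono g h1
          _ = (iterMax g)^[j+1] 0 := (Function.iterate_succ_apply' _ _ _).symm
      · push_cast
        constructor
        · linarith
        · intro _; linarith
  obtain ⟨_, _, h3⟩ := key k le_rfl
  have h2 := h3 hk1
  have h0 := (ha 0).2
  have hmk := (ha (m k)).1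
  linarith
end

section
/- Let (a_{m,n}) be a double sequence of reals in [0,1]. Define f(s) := 2s² + 2s and G(ε,g) := ((f ∘ g)^M)^(⌈1/ε⌉)(0). Then for all ε > 0 and all g : ℕ → ℕ there exist N ≤ G(ε,g) and p, q ≤ N such that for all i, j ≤ g(N), a_{p,q} ≤ a_{i,j} + ε. -/
/-- `f(s) := 2s² + 2s`. -/
def fPair (s : ℕ) : ℕ := 2*s^2 + 2*s

/-- `G(ε,g) := ((f ∘ g)^M)^(⌈1/ε⌉)(0)`. -/
noncomputable def Gfun (ε : ℝ) (g : ℕ → ℕ) : ℕ := (iterMax (fPair ∘ g))^[⌈1/ε⌉₊] 0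

theorem stmt2 (a : ℕ → ℕ → ℝ) (ha : ∀ m n, a m n ∈ Set.Icc (0:ℝ) 1)
    (ε : ℝ) (hε : 0 < ε) (g : ℕ → ℕ) :
    ∃ N ≤ Gfun ε g, ∃ p ≤ N, ∃ q ≤ N,
      ∀ i ≤ g N, ∀ j ≤ g N, a p q ≤ a i j + ε := by
  by_contra hcon
  push_neg at hcon
  set h := iterMax (fPair ∘ g) with hh
  set K := ⌈1/ε⌉₊ with hK
  set N : ℕ → ℕ := fun k => h^[k] 0 with hN
  have hNsucc : ∀ k, N k ≤ N (k+1) := by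
    intro k
    induction k with
    | zero => exact Nat.zero_le _
    | succ k ih =>
      have : N (k+1) = h (N k) := by
        simp [hN, Function.iterate_succ_apply']
      have h2 : N (k+2) = h (N (k+1)) := by
        simp [hN, Function.iterate_succ_apply']
      rw [this, h2]
      exact iterMax_mono _ ih
  have hNmono : Monotone N := monotone_nat_of_le_succ hNsucc
  have hGN : Gfun ε g = N K := rfl
  have hg_le : ∀ k, g (N k) ≤ N (k+1) := by
    intro k
    have h1 : N (k+1) = h (N k) := by
      simp [hN, Function.iterate_succ_apply']
    rw [h1]
    calc g (N k) ≤ fPair (g (N k)) := by unfold fPair; nlinarith [sq_nonneg (g (N k))]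
    _ ≤ h (N k) := le_iterMax (fPair ∘ g) (N k)
  -- claim : for all k ≤ K, there exist p,q ≤ N k with a p q + k*ε ≤ 1
  have claim : ∀ k ≤ K, ∃ p ≤ N k, ∃ q ≤ N k, a p q + k * ε ≤ 1 := by
    intro k
    induction k with
    | zero =>
      intro _
      exact ⟨0, le_rfl, 0, le_rfl, by simpa using (ha 0 0).2⟩
    | succ k ih =>
      intro hk
      obtain ⟨p, hp, q, hq, hval⟩ := ih (by omega)
      have hNk : N k ≤ Gfun ε g := hGN ▸ hNmono (by omega : k ≤ K)
      obtain ⟨i, hi, j, hj, hlt⟩ := hcon (N k) hNk p hp q hq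
      refine ⟨i, le_trans hi (hg_le k), j, le_trans hj (hg_le k), ?_⟩
      push_cast
      linarith
  obtain ⟨p, hp, q, hq, hval⟩ := claim K le_rfl
  have hKε : (1:ℝ) ≤ K * ε := by
    rw [hK]
    calc (1:ℝ) = (1/ε) * ε := by field_simp
    _ ≤ ⌈1/ε⌉₊ * ε := by
      gcongr
      exact Nat.le_ceil _
  obtain ⟨i, hi, j, hj, hlt⟩ := hcon (N K) (le_of_eq hGN.symm) p hp q hq
  have h0 := (ha i j).1
  have h1 := (ha p q).1
  linarith
end

section
/- Let X be a Banach space with modulus of uniform convexity η, i.e., η : (0,∞) → (0,1] satisfies: for all ε > 0 and all x, y ∈ X with ‖x‖ ≤ 1, ‖y‖ ≤ 1 and ‖x−y‖ ≥ ε, one has ‖(x+y)/2‖ ≤ 1 − η(ε). Define u(ε) := (ε/2)·η(ε). Then for any ε > 0 and any x, y ∈ X with ‖x‖ ≤ ‖y‖ ≤ 1 and ‖x−y‖ ≥ ε, one has ‖(x+y)/2‖ ≤ ‖y‖ − u(ε). -/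
theorem stmt3 {X : Type*} [NormedAddCommGroup X] [NormedSpace ℝ X] [CompleteSpace X]
    (η : ℝ → ℝ) (hηrange : ∀ ε > (0:ℝ), η ε ∈ Set.Ioc (0:ℝ) 1)
    (hmod : ∀ ε > (0:ℝ), ∀ x y : X, ‖x‖ ≤ 1 → ‖y‖ ≤ 1 → ε ≤ ‖x - y‖ →
      ‖(2:ℝ)⁻¹ • (x + y)‖ ≤ 1 - η ε)
    (ε : ℝ) (hε : 0 < ε) (x y : X)
    (hxy : ‖x‖ ≤ ‖y‖) (hy : ‖y‖ ≤ 1) (hdist : ε ≤ ‖x - y‖) :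
    ‖(2:ℝ)⁻¹ • (x + y)‖ ≤ ‖y‖ - (ε/2) * η ε := by
  have ht : ε / 2 ≤ ‖y‖ := by
    have h1 : ‖x - y‖ ≤ ‖x‖ + ‖y‖ := norm_sub_le x y
    linarith
  have htpos : 0 < ‖y‖ := lt_of_lt_of_le (by linarith) ht
  have hη := (hηrange ε hε).1
  have hx1 : ‖‖y‖⁻¹ • x‖ ≤ 1 := by
    rw [norm_smul, norm_inv, norm_norm]
    rw [inv_mul_le_one₀ htpos]
    simpa using hxy
  have hy1 : ‖‖y‖⁻¹ • y‖ ≤ 1 := by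
    rw [norm_smul, norm_inv, norm_norm, inv_mul_cancel₀ htpos.ne']
  have hd1 : ε ≤ ‖(‖y‖⁻¹ • x) - (‖y‖⁻¹ • y)‖ := by
    rw [← smul_sub, norm_smul, norm_inv, norm_norm]
    calc ε ≤ ‖x - y‖ := hdist
    _ = 1 * ‖x - y‖ := (one_mul _).symm
    _ ≤ ‖y‖⁻¹ * ‖x - y‖ := by
        apply mul_le_mul_of_nonneg_right _ (norm_nonneg _)
        rw [le_inv_comm₀ one_pos htpos]; simpa using hy
  have key := hmod ε hε _ _ hx1 hy1 hd1
  rw [← smul_add, smul_comm, norm_smul, norm_inv, norm_norm,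
    inv_mul_le_iff₀ htpos] at key
  calc ‖(2:ℝ)⁻¹ • (x + y)‖ ≤ ‖y‖ * (1 - η ε) := key
  _ = ‖y‖ - ‖y‖ * η ε := by ring
  _ ≤ ‖y‖ - ε / 2 * η ε := by nlinarith
end

section
/- Let X be a Banach space, d ≥ 1, and T_1, ..., T_d : X → X commuting linear operators with ‖T_l y‖ ≤ ‖y‖ for all y ∈ X and all l. Let x ∈ X with ‖x‖ ≤ 1, and for n ∈ ℕ put x_n := (n+1)^(−d) Σ_{k ∈ [0,n]^d} T^k x, where T^k x := T_1^{k_1} ⋯ T_d^{k_d} x. Let Q ∈ ℕ, (c_j)_{j ∈ [0,Q]^d} ⊆ [0,1] with Σ_j c_j = 1, and set z := Σ_{j ∈ [0,Q]^d} c_j T^j x and z_n := (n+1)^(−d) Σ_{i ∈ [0,n]^d} T^i z. Then for all n ≥ Q, ‖x_n − z_n‖ ≤ 2^d Q / (n+1). -/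
/-- `box d n` is `[0,n]^d`. -/
def box (d n : ℕ) : Finset (Fin d → ℕ) := Fintype.piFinset fun _ => Finset.range (n+1)

/-- `Tpow T k = T₁^{k₁} ⋯ T_d^{k_d}`. -/
def Tpow {X : Type*} [AddCommGroup X] [Module ℝ X] {d : ℕ}
    (T : Fin d → X →ₗ[ℝ] X) (k : Fin d → ℕ) : X →ₗ[ℝ] X :=
  (List.ofFn fun l => T l ^ k l).prod

section aux
variable {X : Type*} [NormedAddCommGroup X] [NormedSpace ℝ X] {d : ℕ}

lemma listProdContr (L : List (X →ₗ[ℝ] X)) (h : ∀ f ∈ L, ∀ y : X, ‖f y‖ ≤ ‖y‖) :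
    ∀ y : X, ‖L.prod y‖ ≤ ‖y‖ := by
  induction L with
  | nil => intro y; simp [Module.End.one_apply]
  | cons a L ih =>
    intro y
    rw [List.prod_cons, Module.End.mul_apply]
    exact (h a (List.mem_cons_self (a := a) (l := L)) _).trans (ih (fun f hf => h f (List.mem_cons_of_mem _ hf)) y)

lemma powContr (f : X →ₗ[ℝ] X) (h : ∀ y : X, ‖f y‖ ≤ ‖y‖) (m : ℕ) :
    ∀ y : X, ‖(f ^ m) y‖ ≤ ‖y‖ := by
  induction m with
  | zero => intro y; simp [Module.End.one_apply]
  | succ m ih =>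
    intro y
    rw [pow_succ, Module.End.mul_apply]
    exact (ih (f y)).trans (h y)

lemma TpowContr (T : Fin d → X →ₗ[ℝ] X) (hc : ∀ l (y : X), ‖T l y‖ ≤ ‖y‖)
    (k : Fin d → ℕ) (y : X) : ‖Tpow T k y‖ ≤ ‖y‖ := by
  apply listProdContr
  intro f hf
  rw [List.mem_ofFn] at hf
  obtain ⟨i, rfl⟩ := hf
  exact powContr _ (hc i) (k i)

lemma Tpow_succ {e : ℕ} (T : Fin (e+1) → X →ₗ[ℝ] X) (k : Fin (e+1) → ℕ) :
    Tpow T k = T 0 ^ k 0 * Tpow (fun i => T i.succ) (fun i => k i.succ) := by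
  simp [Tpow, List.ofFn_succ]

lemma Tpow_mul : ∀ {d : ℕ} (T : Fin d → X →ₗ[ℝ] X),
    (∀ l m, Commute (T l) (T m)) → ∀ k j : Fin d → ℕ,
    Tpow T k * Tpow T j = Tpow T (k + j) := by
  intro d
  induction d with
  | zero => intro T _ k j; simp [Tpow, List.ofFn_zero]
  | succ e ih =>
    intro T hcomm k j
    rw [Tpow_succ, Tpow_succ, Tpow_succ]
    set T' : Fin e → X →ₗ[ℝ] X := fun i => T i.succ with hT'
    have hP : Tpow T' (fun i => k i.succ) * Tpow T' (fun i => j i.succ)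
        = Tpow T' (fun i => (k + j) i.succ) := by
      have := ih T' (fun l m => hcomm l.succ m.succ) (fun i => k i.succ) (fun i => j i.succ)
      convert this using 2
      rfl
    have hbP : Commute (T 0 ^ j 0) (Tpow T' (fun i => k i.succ)) := by
      apply Commute.list_prod_right
      intro f hf
      rw [List.mem_ofFn] at hf
      obtain ⟨i, rfl⟩ := hf
      exact (hcomm 0 i.succ).pow_pow _ _
    calc T 0 ^ k 0 * Tpow T' (fun i => k i.succ) * (T 0 ^ j 0 * Tpow T' (fun i => j i.succ))
        = T 0 ^ k 0 * (Tpow T' (fun i => k i.succ) * T 0 ^ j 0) * Tpow T' (fun i => j i.succ) := by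
          rw [mul_assoc, mul_assoc, mul_assoc]
      _ = T 0 ^ k 0 * (T 0 ^ j 0 * Tpow T' (fun i => k i.succ)) * Tpow T' (fun i => j i.succ) := by
          rw [hbP.eq]
      _ = (T 0 ^ k 0 * T 0 ^ j 0) * (Tpow T' (fun i => k i.succ) * Tpow T' (fun i => j i.succ)) := by
          rw [mul_assoc, mul_assoc, mul_assoc]
      _ = T 0 ^ (k + j) 0 * Tpow T' (fun i => (k + j) i.succ) := by
          rw [← pow_add, hP]; rfl

end aux

lemma mem_box {d n : ℕ} {k : Fin d → ℕ} : k ∈ box d n ↔ ∀ l, k l ≤ n := by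
  simp [box, Nat.lt_succ_iff]

lemma card_box (d n : ℕ) : (box d n).card = (n+1)^d := by
  simp [box, Fintype.card_piFinset]

lemma real_pow_sub (a b : ℝ) (hb : 0 ≤ b) (hba : b ≤ a) :
    ∀ e : ℕ, a^(e+1) - b^(e+1) ≤ (e+1)*(a-b)*a^e := by
  intro e
  induction e with
  | zero => simp
  | succ e ih =>
    have ha : 0 ≤ a := hb.trans hba
    have h1 : b^(e+1) ≤ a^(e+1) := pow_le_pow_left₀ hb hba _
    have h2 : a * (a^(e+1) - b^(e+1)) ≤ a * ((e+1)*(a-b)*a^e) :=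
      mul_le_mul_of_nonneg_left ih ha
    have h3 : a^(e+1+1) - b^(e+1+1) = a*(a^(e+1) - b^(e+1)) + (a-b)*b^(e+1) := by ring
    have h4 : (a-b)*b^(e+1) ≤ (a-b)*a^(e+1) := by nlinarith
    have h5 : a * ((e+1)*(a-b)*a^e) = ((e:ℝ)+1)*(a-b)*a^(e+1) := by ring
    push_cast
    nlinarith

lemma two_mul_le_two_pow : ∀ e : ℕ, 2*(e+1) ≤ 2^(e+1) := by
  intro e
  induction e with
  | zero => norm_num
  | succ e ih =>
    have : (2:ℕ) ≤ 2^(e+1) := Nat.one_lt_two_pow_iff.mpr (by omega)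
    calc 2*(e+1+1) = 2*(e+1) + 2 := by ring
      _ ≤ 2^(e+1) + 2^(e+1) := by omega
      _ = 2^(e+1+1) := by ring

lemma card_bounds {d n Q : ℕ} (hQn : Q ≤ n) {j : Fin d → ℕ} (hj : j ∈ box d Q) :
    ((box d n) \ ((box d n).image (· + j))).card ≤ (n+1)^d - (n-Q+1)^d ∧
    (((box d n).image (· + j)) \ (box d n)).card ≤ (n+1)^d - (n-Q+1)^d := by
  classical
  have hinj : Function.Injective (· + j) := add_left_injective j
  set A := box d n with hA
  set A' := A.image (· + j) with hA'
  have hsub : (box d (n-Q)).image (· + j) ⊆ A ∩ A' := by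
    intro m hm
    obtain ⟨k, hk, rfl⟩ := Finset.mem_image.1 hm
    have hk' := mem_box.1 hk
    have hj' := mem_box.1 hj
    refine Finset.mem_inter.2 ⟨mem_box.2 fun l => ?_, Finset.mem_image.2 ⟨k, mem_box.2 fun l => ?_, rfl⟩⟩
    · have := hk' l; have := hj' l
      show k l + j l ≤ n
      omega
    · have := hk' l; omega
  have hcard_inter : (n-Q+1)^d ≤ (A ∩ A').card := by
    calc (n-Q+1)^d = ((box d (n-Q)).image (· + j)).card := by
          rw [Finset.card_image_of_injective _ hinj, card_box]
      _ ≤ (A ∩ A').card := Finset.card_le_card hsub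
  have hAc : A.card = (n+1)^d := card_box d n
  have hA'c : A'.card = (n+1)^d := by
    rw [hA', Finset.card_image_of_injective _ hinj, card_box]
  have h1 := Finset.card_sdiff_add_card_inter A A'
  have h2 := Finset.card_sdiff_add_card_inter A' A
  have h3 : (A' ∩ A).card = (A ∩ A').card := by rw [Finset.inter_comm]
  constructor <;> omega

lemma Dj_bound {X : Type*} [NormedAddCommGroup X] [NormedSpace ℝ X] {d : ℕ}
    (T : Fin d → X →ₗ[ℝ] X) (hcontr : ∀ l (y : X), ‖T l y‖ ≤ ‖y‖)
    (x : X) (hx : ‖x‖ ≤ 1) {n Q : ℕ} (hQn : Q ≤ n) {j : Fin d → ℕ} (hj : j ∈ box d Q) :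
    ‖(∑ k ∈ box d n, Tpow T k x) - ∑ k ∈ box d n, Tpow T (k + j) x‖
      ≤ 2 * (((n+1)^d - (n-Q+1)^d : ℕ) : ℝ) := by
  classical
  have hinj : Function.Injective (· + j) := add_left_injective j
  obtain ⟨hb1, hb2⟩ := card_bounds (n := n) hQn hj
  have himg : ∑ m ∈ (box d n).image (· + j), Tpow T m x
      = ∑ k ∈ box d n, Tpow T (k + j) x :=
    Finset.sum_image (f := fun m => Tpow T m x) (fun a _ b _ h => hinj h)
  rw [← himg]
  rw [← Finset.sum_sdiff_sub_sum_sdiff]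
  have key : ∀ (s : Finset (Fin d → ℕ)), ‖∑ m ∈ s, Tpow T m x‖ ≤ (s.card : ℝ) := by
    intro s
    calc ‖∑ m ∈ s, Tpow T m x‖ ≤ ∑ m ∈ s, ‖Tpow T m x‖ := norm_sum_le _ _
      _ ≤ ∑ m ∈ s, 1 := Finset.sum_le_sum fun m _ => (TpowContr T hcontr m x).trans hx
      _ = (s.card : ℝ) := by simp
  refine (norm_sub_le _ _).trans ?_
  have k1 := key ((box d n) \ ((box d n).image (· + j)))
  have k2 := key (((box d n).image (· + j)) \ (box d n))
  have c1 : ((((box d n) \ ((box d n).image (· + j))).card : ℝ))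
      ≤ (((n+1)^d - (n-Q+1)^d : ℕ) : ℝ) := Nat.cast_le.2 hb1
  have c2 : (((((box d n).image (· + j)) \ (box d n)).card : ℝ))
      ≤ (((n+1)^d - (n-Q+1)^d : ℕ) : ℝ) := Nat.cast_le.2 hb2
  linarith

/-- The multi-parameter ergodic average `x_n = (n+1)^{-d} ∑_{k ∈ [0,n]^d} T^k x`. -/
noncomputable def erg {X : Type*} [AddCommGroup X] [Module ℝ X] {d : ℕ}
    (T : Fin d → X →ₗ[ℝ] X) (x : X) (n : ℕ) : X :=
  ((n+1 : ℝ)^d)⁻¹ • ∑ k ∈ box d n, Tpow T k x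

theorem stmt6 {X : Type*} [NormedAddCommGroup X] [NormedSpace ℝ X] [CompleteSpace X]
    (d : ℕ) (hd : 1 ≤ d) (T : Fin d → X →ₗ[ℝ] X)
    (hcomm : ∀ l m, T l ∘ₗ T m = T m ∘ₗ T l)
    (hcontr : ∀ l (y : X), ‖T l y‖ ≤ ‖y‖)
    (x : X) (hx : ‖x‖ ≤ 1)
    (Q : ℕ) (c : (Fin d → ℕ) → ℝ) (hc : ∀ j ∈ box d Q, c j ∈ Set.Icc (0:ℝ) 1)
    (hsum : ∑ j ∈ box d Q, c j = 1) :
    ∀ n, Q ≤ n →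
      ‖erg T x n - erg T (∑ j ∈ box d Q, c j • Tpow T j x) n‖ ≤ 2^d * Q / (n+1) := by
  obtain ⟨e, rfl⟩ : ∃ e, d = e + 1 := ⟨d - 1, by omega⟩
  intro n hQn
  classical
  have hcomm' : ∀ l m, Commute (T l) (T m) := fun l m => hcomm l m
  set A := box (e+1) n with hA
  set z := ∑ j ∈ box (e+1) Q, c j • Tpow T j x with hz
  have hz_sum : ∀ k : Fin (e+1) → ℕ,
      Tpow T k z = ∑ j ∈ box (e+1) Q, c j • Tpow T (k + j) x := by
    intro k
    rw [hz, map_sum]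
    refine Finset.sum_congr rfl fun j hj => ?_
    rw [map_smul]
    congr 1
    have := congrArg (fun (f : X →ₗ[ℝ] X) => f x) (Tpow_mul T hcomm' k j)
    simpa [Module.End.mul_apply] using this
  have hdiff : erg T x n - erg T z n
      = ((n+1:ℝ)^(e+1))⁻¹ • ∑ j ∈ box (e+1) Q, c j •
          ((∑ k ∈ A, Tpow T k x) - ∑ k ∈ A, Tpow T (k + j) x) := by
    rw [erg, erg, ← smul_sub]
    congr 1
    have h1 : ∑ k ∈ A, Tpow T k z
        = ∑ j ∈ box (e+1) Q, c j • ∑ k ∈ A, Tpow T (k + j) x := by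
      simp_rw [hz_sum]
      rw [Finset.sum_comm]
      exact Finset.sum_congr rfl fun j _ => (Finset.smul_sum).symm
    have h2 : (∑ k ∈ A, Tpow T k x)
        = ∑ j ∈ box (e+1) Q, c j • ∑ k ∈ A, Tpow T k x := by
      rw [← Finset.sum_smul, hsum, one_smul]
    rw [h1]
    nth_rewrite 1 [h2]
    rw [← Finset.sum_sub_distrib]
    exact Finset.sum_congr rfl fun j _ => (smul_sub _ _ _).symm
  set N : ℕ := (n+1)^(e+1) - (n-Q+1)^(e+1) with hN
  have hDj : ∀ j ∈ box (e+1) Q,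
      ‖(∑ k ∈ A, Tpow T k x) - ∑ k ∈ A, Tpow T (k + j) x‖ ≤ 2 * (N:ℝ) :=
    fun j hj => Dj_bound T hcontr x hx hQn hj
  have hnorm : ‖erg T x n - erg T z n‖ ≤ ((n+1:ℝ)^(e+1))⁻¹ * (2 * (N:ℝ)) := by
    rw [hdiff, norm_smul]
    have h0 : ‖((n+1:ℝ)^(e+1))⁻¹‖ = ((n+1:ℝ)^(e+1))⁻¹ := by
      rw [Real.norm_eq_abs, abs_of_nonneg]
      positivity
    rw [h0]
    refine mul_le_mul_of_nonneg_left ?_ (by positivity)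
    calc ‖∑ j ∈ box (e+1) Q, c j •
            ((∑ k ∈ A, Tpow T k x) - ∑ k ∈ A, Tpow T (k + j) x)‖
        ≤ ∑ j ∈ box (e+1) Q, ‖c j •
            ((∑ k ∈ A, Tpow T k x) - ∑ k ∈ A, Tpow T (k + j) x)‖ := norm_sum_le _ _
      _ ≤ ∑ j ∈ box (e+1) Q, c j * (2 * (N:ℝ)) := by
          refine Finset.sum_le_sum fun j hj => ?_
          rw [norm_smul, Real.norm_eq_abs, abs_of_nonneg (hc j hj).1]
          exact mul_le_mul_of_nonneg_left (hDj j hj) (hc j hj).1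
      _ = (∑ j ∈ box (e+1) Q, c j) * (2 * (N:ℝ)) := (Finset.sum_mul _ _ _).symm
      _ = 2 * (N:ℝ) := by rw [hsum, one_mul]
  have hQle : (Q:ℝ) ≤ (n:ℝ) := Nat.cast_le.2 hQn
  have hb0 : (0:ℝ) ≤ (n:ℝ) + 1 - Q := by linarith
  have hcast : (N:ℝ) = ((n:ℝ)+1)^(e+1) - ((n:ℝ)+1-Q)^(e+1) := by
    have h1 : ((n - Q + 1 : ℕ) : ℝ) = (n:ℝ) + 1 - Q := by
      rw [Nat.cast_add, Nat.cast_sub hQn, Nat.cast_one]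
      ring
    rw [hN, Nat.cast_sub (Nat.pow_le_pow_left (by omega) _), Nat.cast_pow, Nat.cast_pow, h1]
    push_cast
    ring
  have hNle : (N:ℝ) ≤ ((e:ℝ)+1) * Q * ((n:ℝ)+1)^e := by
    rw [hcast]
    have h := real_pow_sub ((n:ℝ)+1) ((n:ℝ)+1-Q) hb0 (by linarith [Nat.cast_nonneg (α := ℝ) Q]) e
    have h2 : ((n:ℝ)+1) - ((n:ℝ)+1-Q) = Q := by ring
    rw [h2] at h
    exact h
  have ha : (0:ℝ) < (n:ℝ) + 1 := by positivity
  refine hnorm.trans ?_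
  calc ((n+1:ℝ)^(e+1))⁻¹ * (2 * (N:ℝ))
      ≤ ((n+1:ℝ)^(e+1))⁻¹ * (2 * (((e:ℝ)+1) * Q * ((n:ℝ)+1)^e)) := by gcongr
    _ = (2 * ((e:ℝ)+1)) * Q / ((n:ℝ)+1) := by
        rw [pow_succ]
        field_simp
    _ ≤ 2^(e+1) * Q / ((n:ℝ)+1) := by
        have h2e : (2 * ((e:ℝ)+1)) ≤ 2^(e+1) := by
          exact_mod_cast two_mul_le_two_pow e
        gcongr
end

section
/- Let X be a Banach space, d ≥ 1, T_1,...,T_d : X → X commuting linear contractions, x ∈ X with ‖x‖ ≤ 1, and x_n := (n+1)^(−d) Σ_{k ∈ [0,n]^d} T^k x. With Φ(d,δ,Q) := max(Q, ⌈2^d Q/δ⌉), f(s) := 2s²+2s, G(ε,g) := ((f∘g)^M)^(⌈1/ε⌉)(0), h_{γ,g,d}(n) := Φ(d,γ/2,n) + g(Φ(d,γ/2,n)), and Ψ(d,γ,g) := Φ(d,γ/2, G(γ/2, h_{γ,g,d})), it holds that for every γ > 0 and every g : ℕ → ℕ there exists N ≤ Ψ(d,γ,g) such that for all i, j ∈ [N,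 N+g(N)], ‖x_i‖ ≤ ‖(x_i + x_j)/2‖ + γ. -/
/-- `Φ(d,δ,Q) := max(Q, ⌈2^d Q / δ⌉)`. -/
noncomputable def Phi (d : ℕ) (δ : ℝ) (Q : ℕ) : ℕ := max Q ⌈(2^d * Q : ℝ) / δ⌉₊

/-- `h_{γ,g,d}(n) := Φ(d,γ/2,n) + g(Φ(d,γ/2,n))`. -/
noncomputable def hfun (γ : ℝ) (g : ℕ → ℕ) (d n : ℕ) : ℕ :=
  Phi d (γ/2) n + g (Phi d (γ/2) n)

/-- `Ψ(d,γ,g) := Φ(d,γ/2,G(γ/2,h_{γ,g,d}))`. -/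
noncomputable def Psi (d : ℕ) (γ : ℝ) (g : ℕ → ℕ) : ℕ :=
  Phi d (γ/2) (Gfun (γ/2) (hfun γ g d))

section Aux

variable {X : Type*} [NormedAddCommGroup X] [NormedSpace ℝ X]

lemma listProd_contr (L : List (X →ₗ[ℝ] X)) (h : ∀ A ∈ L, ∀ y : X, ‖A y‖ ≤ ‖y‖) (y : X) :
    ‖L.prod y‖ ≤ ‖y‖ := by
  induction L generalizing y with
  | nil => simp [Module.End.one_apply]
  | cons A L ih =>
    rw [List.prod_cons, Module.End.mul_apply]
    exact le_trans (h A (by simp) _) (ih (fun B hB z => h B (by simp [hB]) z) y)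

lemma ofFn_contr {d : ℕ} (f : Fin d → (X →ₗ[ℝ] X)) (hf : ∀ l (y : X), ‖f l y‖ ≤ ‖y‖)
    (y : X) : ‖(List.ofFn f).prod y‖ ≤ ‖y‖ := by
  refine listProd_contr _ (fun A hA z => ?_) y
  obtain ⟨l, rfl⟩ := List.mem_ofFn.mp hA
  exact hf l z

lemma tele {d : ℕ} (f g : Fin d → (X →ₗ[ℝ] X)) (ε : ℝ) (hε : 0 ≤ ε)
    (hf : ∀ l (y : X), ‖f l y‖ ≤ ‖y‖) (hg : ∀ l (y : X), ‖g l y‖ ≤ ‖y‖)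
    (hfg : ∀ l (y : X), ‖f l y - g l y‖ ≤ ε * ‖y‖) (y : X) :
    ‖(List.ofFn f).prod y - (List.ofFn g).prod y‖ ≤ d * ε * ‖y‖ := by
  induction d with
  | zero => simp
  | succ d ih =>
    rw [List.ofFn_succ, List.ofFn_succ, List.prod_cons, List.prod_cons,
      Module.End.mul_apply, Module.End.mul_apply]
    set P := (List.ofFn fun i => f i.succ).prod y with hP
    set Q := (List.ofFn fun i => g i.succ).prod y with hQ
    have h1 : ‖f 0 P - g 0 Q‖ ≤ ‖f 0 P - g 0 P‖ + ‖g 0 P - g 0 Q‖ := by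
      have := norm_add_le (f 0 P - g 0 P) (g 0 P - g 0 Q)
      simpa using this
    have h2 : ‖f 0 P - g 0 P‖ ≤ ε * ‖y‖ := by
      refine le_trans (hfg 0 P) ?_
      have hPy : ‖P‖ ≤ ‖y‖ := ofFn_contr _ (fun l z => hf l.succ z) y
      exact mul_le_mul_of_nonneg_left hPy hε
    have h3 : ‖g 0 P - g 0 Q‖ ≤ d * ε * ‖y‖ := by
      have : g 0 P - g 0 Q = g 0 (P - Q) := by rw [map_sub]
      rw [this]
      refine le_trans (hg 0 _) ?_
      exact ih (fun i => f i.succ) (fun i => g i.succ) (fun l z => hf l.succ z)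
        (fun l z => hg l.succ z) (fun l z => hfg l.succ z)
    calc ‖f 0 P - g 0 Q‖ ≤ ε * ‖y‖ + d * ε * ‖y‖ := le_trans h1 (add_le_add h2 h3)
      _ = (d + 1) * ε * ‖y‖ := by ring
      _ = ((d : ℝ) + 1) * ε * ‖y‖ := by norm_num
      _ = ((d + 1 : ℕ) : ℝ) * ε * ‖y‖ := by push_cast; ring

lemma ofFn_prod_mul {d : ℕ} (f g : Fin d → (X →ₗ[ℝ] X))
    (hc : ∀ l m, l ≠ m → Commute (f l) (g m)) :
    (List.ofFn f).prod * (List.ofFn g).prod = (List.ofFn fun l => f l * g l).prod := by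
  induction d with
  | zero => simp
  | succ d ih =>
    rw [List.ofFn_succ, List.ofFn_succ, List.ofFn_succ, List.prod_cons, List.prod_cons,
      List.prod_cons]
    have hcomm : Commute (List.ofFn fun i : Fin d => f i.succ).prod (g 0) := by
      refine (Commute.list_prod_right _ _ ?_).symm
      intro A' hA'
      obtain ⟨l, rfl⟩ := List.mem_ofFn.mp hA'
      exact (hc l.succ 0 (Fin.succ_ne_zero l)).symm
    calc f 0 * (List.ofFn fun i : Fin d => f i.succ).prod *
          (g 0 * (List.ofFn fun i : Fin d => g i.succ).prod)
        = f 0 * ((List.ofFn fun i : Fin d => f i.succ).prod * g 0 *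
            (List.ofFn fun i : Fin d => g i.succ).prod) := by noncomm_ring
      _ = f 0 * (g 0 * ((List.ofFn fun i : Fin d => f i.succ).prod *
            (List.ofFn fun i : Fin d => g i.succ).prod)) := by rw [hcomm.eq]; noncomm_ring
      _ = f 0 * g 0 * ((List.ofFn fun i : Fin d => f i.succ).prod *
            (List.ofFn fun i : Fin d => g i.succ).prod) := by noncomm_ring
      _ = f 0 * g 0 * (List.ofFn fun i : Fin d => f i.succ * g i.succ).prod := by
            rw [ih (fun i => f i.succ) (fun i => g i.succ)
              (fun l m hlm => hc l.succ m.succ (by simpa using hlm))]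

lemma ofFn_prod_smul {d : ℕ} (c : ℝ) (S : Fin d → (X →ₗ[ℝ] X)) :
    (List.ofFn fun l => c • S l).prod = c ^ d • (List.ofFn S).prod := by
  induction d with
  | zero => simp
  | succ d ih =>
    rw [List.ofFn_succ, List.ofFn_succ, List.prod_cons, List.prod_cons,
      ih (fun i => S i.succ)]
    rw [smul_mul_assoc, mul_smul_comm, smul_smul, pow_succ]
    ring_nf

lemma ofFn_prod_sum {R : Type*} [Semiring R] {d : ℕ} (s : Fin d → Finset ℕ)
    (F : Fin d → ℕ → R) :
    (List.ofFn fun l => ∑ m ∈ s l, F l m).prod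
      = ∑ k ∈ Fintype.piFinset (fun l => s l), (List.ofFn fun l => F l (k l)).prod := by
  induction d with
  | zero => simp
  | succ d ih =>
    rw [List.ofFn_succ, List.prod_cons, ih (fun i => s i.succ) (fun i => F i.succ),
      Finset.sum_mul_sum]
    rw [← Finset.sum_product']
    refine Finset.sum_nbij' (fun p => Fin.cons p.1 p.2) (fun k => (k 0, fun i => k i.succ))
      ?_ ?_ ?_ ?_ ?_
    · intro p hp
      simp only [Finset.mem_product, Fintype.mem_piFinset] at hp ⊢
      intro l
      refine Fin.cases ?_ ?_ l
      · simpa using hp.1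
      · intro i; simpa using hp.2 i
    · intro k hk
      simp only [Fintype.mem_piFinset] at hk
      simp only [Finset.mem_product, Fintype.mem_piFinset]
      exact ⟨hk 0, fun i => hk i.succ⟩
    · intro p hp; simp
    · intro k hk
      funext l
      refine Fin.cases ?_ ?_ l
      · simp
      · intro i; simp
    · intro p hp
      rw [List.ofFn_succ, List.prod_cons]
      simp

end Aux

section Ops

variable {X : Type*} [NormedAddCommGroup X] [NormedSpace ℝ X] {d : ℕ}
  (T : Fin d → X →ₗ[ℝ] X)

noncomputable def Bop (l : Fin d) (N : ℕ) : X →ₗ[ℝ] X :=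
  ((N : ℝ) + 1)⁻¹ • ∑ m ∈ Finset.range (N+1), T l ^ m

noncomputable def ops (N : ℕ) : X →ₗ[ℝ] X := (List.ofFn fun l => Bop T l N).prod

lemma pow_contr (hcontr : ∀ l (y : X), ‖T l y‖ ≤ ‖y‖) (l : Fin d) (m : ℕ) :
    ∀ y : X, ‖(T l ^ m) y‖ ≤ ‖y‖ := by
  induction m with
  | zero => intro y; simp [Module.End.one_apply]
  | succ m ih =>
    intro y
    rw [pow_succ, Module.End.mul_apply]
    exact le_trans (ih (T l y)) (hcontr l y)

lemma Bop_contr (hcontr : ∀ l (y : X), ‖T l y‖ ≤ ‖y‖) (l : Fin d) (N : ℕ) (y : X) :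
    ‖Bop T l N y‖ ≤ ‖y‖ := by
  have h1 : ‖(∑ m ∈ Finset.range (N+1), T l ^ m) y‖ ≤ ((N:ℝ)+1) * ‖y‖ := by
    rw [LinearMap.sum_apply]
    refine le_trans (norm_sum_le _ _) ?_
    have : ∀ m ∈ Finset.range (N+1), ‖(T l ^ m) y‖ ≤ ‖y‖ :=
      fun m _ => pow_contr T hcontr l m y
    calc ∑ m ∈ Finset.range (N+1), ‖(T l ^ m) y‖ ≤ ∑ m ∈ Finset.range (N+1), ‖y‖ :=
          Finset.sum_le_sum this
      _ = ((N:ℝ)+1) * ‖y‖ := by rw [Finset.sum_const, Finset.card_range]; push_cast; ring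
  rw [Bop, LinearMap.smul_apply, norm_smul]
  have hpos : (0:ℝ) < (N:ℝ) + 1 := by positivity
  rw [norm_inv, Real.norm_eq_abs, abs_of_pos hpos]
  calc ((N:ℝ)+1)⁻¹ * ‖(∑ m ∈ Finset.range (N+1), T l ^ m) y‖
      ≤ ((N:ℝ)+1)⁻¹ * (((N:ℝ)+1) * ‖y‖) := mul_le_mul_of_nonneg_left h1 (by positivity)
    _ = ‖y‖ := by field_simp

lemma ops_contr (hcontr : ∀ l (y : X), ‖T l y‖ ≤ ‖y‖) (N : ℕ) (y : X) :
    ‖ops T N y‖ ≤ ‖y‖ :=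
  ofFn_contr _ (fun l z => Bop_contr T hcontr l N z) y

lemma commute_TT (hcomm : ∀ l m, T l ∘ₗ T m = T m ∘ₗ T l) (l m : Fin d) :
    Commute (T l) (T m) := by
  rw [Commute, SemiconjBy, Module.End.mul_eq_comp, Module.End.mul_eq_comp]
  exact hcomm l m

lemma commute_Bop (hcomm : ∀ l m, T l ∘ₗ T m = T m ∘ₗ T l) (l m : Fin d)
    (N N' : ℕ) : Commute (Bop T l N) (Bop T m N') := by
  rw [Bop, Bop]
  refine Commute.smul_left ?_ _ |>.smul_right _
  refine Commute.sum_left _ _ _ (fun i _ => ?_)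
  refine Commute.sum_right _ _ _ (fun j _ => ?_)
  exact (commute_TT T hcomm l m).pow_pow i j

lemma oneD (hcontr : ∀ l (y : X), ‖T l y‖ ≤ ‖y‖) (l : Fin d) (n M : ℕ) (hnM : n ≤ M)
    (y : X) :
    ‖Bop T l M y - Bop T l M (Bop T l n y)‖ ≤ (n : ℝ) / (M + 1) * ‖y‖ := by
  set f : ℕ → X := fun m => (T l ^ m) y with hf
  have hfb : ∀ m, ‖f m‖ ≤ ‖y‖ := fun m => pow_contr T hcontr l m y
  set S1 : X := ∑ m ∈ Finset.range (M+1), f m with hS1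
  set W : ℕ → X := fun q => ∑ m ∈ Finset.range (M+1), f (m + q) with hW
  have happly : ∀ (N : ℕ) (z : X), Bop T l N z
      = ((N:ℝ)+1)⁻¹ • ∑ m ∈ Finset.range (N+1), (T l ^ m) z := by
    intro N z
    rw [Bop, LinearMap.smul_apply, LinearMap.sum_apply]
  have hM : Bop T l M y = ((M:ℝ)+1)⁻¹ • S1 := happly M y
  have hMn : Bop T l M (Bop T l n y)
      = (((M:ℝ)+1)⁻¹ * ((n:ℝ)+1)⁻¹) • ∑ q ∈ Finset.range (n+1), W q := by
    rw [happly n y, happly M]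
    simp only [map_smul, map_sum]
    simp only [← Module.End.mul_apply, ← pow_add]
    rw [← Finset.smul_sum, smul_smul]
    congr 1
    exact Finset.sum_comm (s := Finset.range (M+1)) (t := Finset.range (n+1))
      (f := fun m q => f (m + q))
  have hsplit : ∑ q ∈ Finset.range (n+1), (S1 - W q)
      = ((n:ℝ)+1) • S1 - ∑ q ∈ Finset.range (n+1), W q := by
    rw [Finset.sum_sub_distrib, Finset.sum_const, Finset.card_range]
    congr 1
    rw [← Nat.cast_smul_eq_nsmul ℝ]
    push_cast
    ring_nf
  have key : Bop T l M y - Bop T l M (Bop T l n y)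
      = (((M:ℝ)+1)⁻¹ * ((n:ℝ)+1)⁻¹) • ∑ q ∈ Finset.range (n+1), (S1 - W q) := by
    rw [hM, hMn, hsplit, smul_sub]
    congr 1
    rw [smul_smul]
    congr 1
    have h1 : ((n:ℝ)+1) ≠ 0 := by positivity
    field_simp
  have hDq : ∀ q ∈ Finset.range (n+1), ‖S1 - W q‖ ≤ 2 * (q:ℝ) * ‖y‖ := by
    intro q hq
    have hqn : q ≤ n := Nat.lt_succ_iff.mp (Finset.mem_range.mp hq)
    have hqM : q ≤ M + 1 := le_trans hqn (le_trans hnM (Nat.le_succ M))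
    have e1 : W q = ∑ i ∈ Finset.Ico q (q + (M+1)), f i := by
      rw [hW, Finset.sum_Ico_eq_sum_range]
      simp only [Nat.add_sub_cancel_left]
      exact Finset.sum_congr rfl (fun m _ => by rw [Nat.add_comm])
    have e2 : S1 = ∑ i ∈ Finset.Ico 0 q, f i + ∑ i ∈ Finset.Ico q (M+1), f i := by
      rw [hS1, Finset.range_eq_Ico, ← Finset.sum_Ico_consecutive f (Nat.zero_le q) hqM]
    have e3 : ∑ i ∈ Finset.Ico q (q + (M+1)), f i
        = ∑ i ∈ Finset.Ico q (M+1), f i + ∑ i ∈ Finset.Ico (M+1) (q + (M+1)), f i := by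
      rw [← Finset.sum_Ico_consecutive f hqM (by omega)]
    have e4 : S1 - W q
        = ∑ i ∈ Finset.Ico 0 q, f i - ∑ i ∈ Finset.Ico (M+1) (q + (M+1)), f i := by
      rw [e1, e2, e3]; abel
    rw [e4]
    have b1 : ‖∑ i ∈ Finset.Ico 0 q, f i‖ ≤ (q:ℝ) * ‖y‖ := by
      refine le_trans (norm_sum_le _ _) ?_
      calc ∑ i ∈ Finset.Ico 0 q, ‖f i‖ ≤ ∑ i ∈ Finset.Ico 0 q, ‖y‖ :=
            Finset.sum_le_sum (fun i _ => hfb i)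
        _ = (q:ℝ) * ‖y‖ := by rw [Finset.sum_const, Nat.card_Ico]; simp
    have b2 : ‖∑ i ∈ Finset.Ico (M+1) (q + (M+1)), f i‖ ≤ (q:ℝ) * ‖y‖ := by
      refine le_trans (norm_sum_le _ _) ?_
      calc ∑ i ∈ Finset.Ico (M+1) (q+(M+1)), ‖f i‖
          ≤ ∑ i ∈ Finset.Ico (M+1) (q+(M+1)), ‖y‖ :=
            Finset.sum_le_sum (fun i _ => hfb i)
        _ = (q:ℝ) * ‖y‖ := by
            rw [Finset.sum_const, Nat.card_Ico]
            simp [Nat.add_sub_cancel]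
    calc ‖∑ i ∈ Finset.Ico 0 q, f i - ∑ i ∈ Finset.Ico (M+1) (q + (M+1)), f i‖
        ≤ ‖∑ i ∈ Finset.Ico 0 q, f i‖ + ‖∑ i ∈ Finset.Ico (M+1) (q + (M+1)), f i‖ :=
          norm_sub_le _ _
      _ ≤ (q:ℝ) * ‖y‖ + (q:ℝ) * ‖y‖ := add_le_add b1 b2
      _ = 2 * (q:ℝ) * ‖y‖ := by ring
  rw [key, norm_smul]
  have hc : ‖((M:ℝ)+1)⁻¹ * ((n:ℝ)+1)⁻¹‖ = ((M:ℝ)+1)⁻¹ * ((n:ℝ)+1)⁻¹ := by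
    rw [Real.norm_eq_abs, abs_of_pos]; positivity
  rw [hc]
  have hgauss : ∑ q ∈ Finset.range (n+1), (q:ℝ) = (n:ℝ) * ((n:ℝ)+1) / 2 := by
    have hgnat := Finset.sum_range_id_mul_two (n+1)
    have : ((∑ q ∈ Finset.range (n+1), q : ℕ) : ℝ) * 2 = ((n:ℝ)+1) * (n:ℝ) := by
      exact_mod_cast hgnat
    push_cast at this
    linarith
  have hsum : ‖∑ q ∈ Finset.range (n+1), (S1 - W q)‖ ≤ (n:ℝ) * ((n:ℝ)+1) * ‖y‖ := by
    refine le_trans (norm_sum_le _ _) ?_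
    refine le_trans (Finset.sum_le_sum hDq) (le_of_eq ?_)
    calc ∑ q ∈ Finset.range (n+1), (2 * (q:ℝ) * ‖y‖)
        = ∑ q ∈ Finset.range (n+1), ((q:ℝ) * (2 * ‖y‖)) :=
          Finset.sum_congr rfl (fun q _ => by ring)
      _ = (∑ q ∈ Finset.range (n+1), (q:ℝ)) * (2 * ‖y‖) := by rw [Finset.sum_mul]
      _ = (n:ℝ) * ((n:ℝ)+1) * ‖y‖ := by rw [hgauss]; ring
  calc ((M:ℝ)+1)⁻¹ * ((n:ℝ)+1)⁻¹ * ‖∑ q ∈ Finset.range (n+1), (S1 - W q)‖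
      ≤ ((M:ℝ)+1)⁻¹ * ((n:ℝ)+1)⁻¹ * ((n:ℝ) * ((n:ℝ)+1) * ‖y‖) :=
        mul_le_mul_of_nonneg_left hsum (by positivity)
    _ = (n : ℝ) / (M + 1) * ‖y‖ := by
        have h1 : ((n:ℝ)+1) ≠ 0 := by positivity
        have h2 : ((M:ℝ)+1) ≠ 0 := by positivity
        field_simp

lemma ops_eq (N : ℕ) :
    ops T N = (((N:ℝ)+1)^d)⁻¹ • ∑ k ∈ box d N, Tpow T k := by
  rw [ops]
  rw [show (List.ofFn fun l => Bop T l N)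
      = List.ofFn fun l => ((N:ℝ)+1)⁻¹ • (∑ m ∈ Finset.range (N+1), T l ^ m) from rfl]
  rw [ofFn_prod_smul, ofFn_prod_sum (fun _ => Finset.range (N+1)) (fun l m => T l ^ m)]
  rw [inv_pow]
  rfl

lemma erg_eq (x : X) (N : ℕ) : erg T x N = ops T N x := by
  rw [erg, ops_eq, LinearMap.smul_apply, LinearMap.sum_apply]

lemma approx (hcomm : ∀ l m, T l ∘ₗ T m = T m ∘ₗ T l)
    (hcontr : ∀ l (y : X), ‖T l y‖ ≤ ‖y‖) (n N : ℕ) (hnN : n ≤ N) (y : X) :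
    ‖ops T N y - ops T N (ops T n y)‖ ≤ (d:ℝ) * ((n:ℝ)/((N:ℝ)+1)) * ‖y‖ := by
  have hmul : ops T N * ops T n = (List.ofFn fun l => Bop T l N * Bop T l n).prod :=
    ofFn_prod_mul _ _ (fun l m _ => commute_Bop T hcomm l m N n)
  have h2 : ops T N (ops T n y) = (ops T N * ops T n) y := rfl
  rw [h2, hmul]
  exact tele (fun l => Bop T l N) (fun l => Bop T l N * Bop T l n) ((n:ℝ)/((N:ℝ)+1))
    (by positivity)
    (fun l z => Bop_contr T hcontr l N z)
    (fun l z => by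
      rw [Module.End.mul_apply]
      exact le_trans (Bop_contr T hcontr l N _) (Bop_contr T hcontr l n z))
    (fun l z => by
      rw [Module.End.mul_apply]
      exact oneD T hcontr l n N hnN z) y

end Ops

lemma two_mul_le_two_pow_s8 (d : ℕ) (hd : 1 ≤ d) : 2 * d ≤ 2 ^ d := by
  induction d with
  | zero => omega
  | succ n ih =>
    rcases Nat.eq_or_lt_of_le hd with h | h
    · simp [← h]
    · have hn : 1 ≤ n := by omega
      have h2 : 2 ≤ 2 ^ n := by
        calc 2 = 2^1 := by norm_num
          _ ≤ 2^n := Nat.pow_le_pow_right (by norm_num) hn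
      have := ih hn
      rw [pow_succ]
      omega

set_option maxHeartbeats 3200000 in
theorem stmt8 {X : Type*} [NormedAddCommGroup X] [NormedSpace ℝ X] [CompleteSpace X]
    (d : ℕ) (hd : 1 ≤ d) (T : Fin d → X →ₗ[ℝ] X)
    (hcomm : ∀ l m, T l ∘ₗ T m = T m ∘ₗ T l)
    (hcontr : ∀ l (y : X), ‖T l y‖ ≤ ‖y‖)
    (x : X) (hx : ‖x‖ ≤ 1)
    (γ : ℝ) (hγ : 0 < γ) (g : ℕ → ℕ) :
    ∃ N ≤ Psi d γ g, ∀ i ∈ Set.Icc N (N + g N), ∀ j ∈ Set.Icc N (N + g N),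
      ‖erg T x i‖ ≤ ‖(2:ℝ)⁻¹ • (erg T x i + erg T x j)‖ + γ := by
  classical
  have hnorm_le_one : ∀ n : ℕ, ‖erg T x n‖ ≤ 1 := by
    intro n
    rw [erg_eq T x n]
    exact le_trans (ops_contr T hcontr n x) hx
  by_cases hγ1 : 1 ≤ γ
  · refine ⟨0, Nat.zero_le _, fun i _ j _ => ?_⟩
    have h1 := norm_nonneg ((2:ℝ)⁻¹ • (erg T x i + erg T x j))
    have h2 := hnorm_le_one i
    linarith
  push_neg at hγ1
  by_contra hcon
  push_neg at hcon
  have hδpos : (0:ℝ) < γ/2 := by linarith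
  set K : ℕ := ⌈1/(γ/2)⌉₊ with hK
  set μ : ℕ → ℕ := fun k => (iterMax (fPair ∘ hfun γ g d))^[k] 0 with hμ
  have hPsi : Psi d γ g = Phi d (γ/2) (μ K) := by rw [hμ, hK]; rfl
  -- basic monotonicity facts
  have hφ_ge : ∀ n : ℕ, n ≤ Phi d (γ/2) n := fun n => le_max_left _ _
  have hφ_mono : ∀ p q : ℕ, p ≤ q → Phi d (γ/2) p ≤ Phi d (γ/2) q := by
    intro p q hpq
    unfold Phi
    have hc : ((p:ℝ)) ≤ (q:ℝ) := by exact_mod_cast hpq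
    gcongr
  have hPhiLB : ∀ Q : ℕ, (2:ℝ)^d * Q ≤ (Phi d (γ/2) Q : ℝ) * (γ/2) := by
    intro Q
    have h1 : ((2:ℝ)^d * Q) / (γ/2) ≤ (⌈((2:ℝ)^d * Q) / (γ/2)⌉₊ : ℝ) := Nat.le_ceil _
    have h2 : (⌈((2:ℝ)^d * Q) / (γ/2)⌉₊ : ℕ) ≤ Phi d (γ/2) Q := le_max_right _ _
    have h2' : ((⌈((2:ℝ)^d * Q) / (γ/2)⌉₊ : ℕ) : ℝ) ≤ (Phi d (γ/2) Q : ℝ) := by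
      exact_mod_cast h2
    have h3 := le_trans h1 h2'
    rw [div_le_iff₀ hδpos] at h3
    linarith
  have hcast2d : (2:ℝ) * d ≤ 2^d := by exact_mod_cast two_mul_le_two_pow_s8 d hd
  have hcastd : (d:ℝ) ≤ 2^d := by
    have := (Nat.lt_two_pow_self (n := d)).le
    exact_mod_cast this
  have hE : ∀ n i : ℕ, Phi d (γ/2) n ≤ i → (d:ℝ) * n / ((i:ℝ)+1) ≤ γ/4 := by
    intro n i hni
    have hP := hPhiLB n
    have hPi : ((Phi d (γ/2) n : ℕ) : ℝ) ≤ (i:ℝ) := by exact_mod_cast hni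
    rw [div_le_iff₀ (by positivity : (0:ℝ) < (i:ℝ)+1)]
    have hn0 : (0:ℝ) ≤ (n:ℝ) := Nat.cast_nonneg n
    have t3 : 2 * (d:ℝ) * n ≤ 2^d * n := mul_le_mul_of_nonneg_right hcast2d hn0
    have t4 : (γ/4) * ((Phi d (γ/2) n : ℕ):ℝ) ≤ (γ/4) * (i:ℝ) :=
      mul_le_mul_of_nonneg_left hPi (by linarith)
    nlinarith
  -- iteration facts
  have hμsucc : ∀ k, μ (k+1) = iterMax (fPair ∘ hfun γ g d) (μ k) := by
    intro k
    rw [hμ]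
    exact Function.iterate_succ_apply' _ _ _
  have hsup : ∀ i k, i ≤ μ k → fPair (hfun γ g d i) ≤ μ (k+1) := by
    intro i k hik
    rw [hμsucc]
    exact Finset.le_sup (f := fPair ∘ hfun γ g d) (Finset.mem_range.mpr (by omega))
  have hfPair_ge : ∀ s, s ≤ fPair s := by
    intro s
    calc s ≤ 2*s := by omega
      _ ≤ 2*s^2 + 2*s := Nat.le_add_left _ _
  have hμmono : Monotone μ := by
    apply monotone_nat_of_le_succ
    intro k
    calc μ k ≤ Phi d (γ/2) (μ k) := hφ_ge _
      _ ≤ hfun γ g d (μ k) := Nat.le_add_right _ _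
      _ ≤ fPair (hfun γ g d (μ k)) := hfPair_ge _
      _ ≤ μ (k+1) := hsup _ k (le_refl _)
  have hPhi0 : Phi d (γ/2) 0 = 0 := by simp [Phi]
  have hfun0 : hfun γ g d 0 = g 0 := by
    unfold hfun
    rw [hPhi0]
    omega
  have hμ0 : μ 0 = 0 := by rw [hμ]; rfl
  have hμ1 : μ 1 = fPair (g 0) := by
    rw [hμsucc 0, hμ0]
    unfold iterMax
    rw [Finset.range_one, Finset.sup_singleton]
    show fPair (hfun γ g d 0) = _
    rw [hfun0]
  -- witnesses for failure of every admissible window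
  have hwit : ∀ n : ℕ, Phi d (γ/2) n ≤ Psi d γ g →
      ∃ i j : ℕ, Phi d (γ/2) n ≤ i ∧ i ≤ hfun γ g d n ∧ Phi d (γ/2) n ≤ j ∧
        j ≤ hfun γ g d n ∧
        ‖(2:ℝ)⁻¹ • (erg T x i + erg T x j)‖ + γ < ‖erg T x i‖ := by
    intro n hn
    obtain ⟨i, hi, j, hj, hlt⟩ := hcon _ hn
    rw [Set.mem_Icc] at hi hj
    exact ⟨i, j, hi.1, hi.2, hj.1, hj.2, hlt⟩
  have hg0 : 1 ≤ g 0 := by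
    by_contra hg
    push_neg at hg
    have hg' : g 0 = 0 := by omega
    obtain ⟨i, j, hi1, hi2, hj1, hj2, hlt⟩ := hwit 0 (by rw [hPhi0]; exact Nat.zero_le _)
    rw [hfun0, hg'] at hi2 hj2
    have hi0 : i = 0 := by omega
    have hj0 : j = 0 := by omega
    rw [hi0, hj0] at hlt
    have hhalf : (2:ℝ)⁻¹ • (erg T x 0 + erg T x 0) = erg T x 0 := by
      rw [← two_smul ℝ (erg T x 0), smul_smul]
      norm_num
    rw [hhalf] at hlt
    linarith
  -- the two β bounds
  have hβ1 : ∀ n M : ℕ, 1 ≤ n → fPair (hfun γ g d n) ≤ M →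
      (d:ℝ) * (hfun γ g d n) / ((M:ℝ)+1) ≤ γ/4 := by
    intro n M hn1 hfM
    have hPH : (Phi d (γ/2) n : ℕ) ≤ hfun γ g d n := Nat.le_add_right _ _
    have hPH' : ((Phi d (γ/2) n : ℕ):ℝ) ≤ ((hfun γ g d n : ℕ):ℝ) := by exact_mod_cast hPH
    have hH0 : (0:ℝ) ≤ ((hfun γ g d n : ℕ):ℝ) := Nat.cast_nonneg _
    have h1 : (2:ℝ)^d ≤ ((hfun γ g d n : ℕ):ℝ) * (γ/2) := by
      have hP := hPhiLB n
      have hn' : (1:ℝ) ≤ (n:ℝ) := by exact_mod_cast hn1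
      nlinarith [mul_le_mul_of_nonneg_right hPH' (le_of_lt hδpos),
        mul_le_mul_of_nonneg_left hn' (by positivity : (0:ℝ) ≤ (2:ℝ)^d)]
    have h2 : 2*((hfun γ g d n : ℕ):ℝ)^2 ≤ (M:ℝ)+1 := by
      have ha : ((fPair (hfun γ g d n) : ℕ):ℝ) ≤ (M:ℝ) := by exact_mod_cast hfM
      have hb : ((fPair (hfun γ g d n) : ℕ):ℝ)
          = 2*((hfun γ g d n : ℕ):ℝ)^2 + 2*((hfun γ g d n : ℕ):ℝ) := by
        unfold fPair
        push_cast
        ring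
      nlinarith
    rw [div_le_iff₀ (by positivity : (0:ℝ) < (M:ℝ)+1)]
    nlinarith [mul_nonneg (sub_nonneg.mpr h1) hH0,
      mul_le_mul_of_nonneg_left h2 (by linarith : (0:ℝ) ≤ γ/4),
      mul_le_mul_of_nonneg_right hcastd hH0]
  have hβ0 : ∀ M : ℕ, μ 2 ≤ M → (d:ℝ) * (g 0) / ((M:ℝ)+1) ≤ γ/4 := by
    intro M hM
    have hfmono : fPair (Phi d (γ/2) (μ 1)) ≤ fPair (hfun γ g d (μ 1)) := by
      have h := Nat.le_add_right (Phi d (γ/2) (μ 1)) (g (Phi d (γ/2) (μ 1)))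
      unfold fPair
      have h2 := Nat.pow_le_pow_left h 2
      have : hfun γ g d (μ 1) = Phi d (γ/2) (μ 1) + g (Phi d (γ/2) (μ 1)) := rfl
      rw [this]
      omega
    have hμ2 : fPair (Phi d (γ/2) (μ 1)) ≤ μ 2 := le_trans hfmono (hsup (μ 1) 1 (le_refl _))
    have h2P : 2*((Phi d (γ/2) (μ 1) : ℕ):ℝ)^2 ≤ (M:ℝ) + 1 := by
      have ha : (fPair (Phi d (γ/2) (μ 1)) : ℕ) ≤ M := le_trans hμ2 hM
      have hb : ((fPair (Phi d (γ/2) (μ 1)) : ℕ):ℝ) ≤ (M:ℝ) := by exact_mod_cast ha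
      have hc : ((fPair (Phi d (γ/2) (μ 1)) : ℕ):ℝ)
          = 2*((Phi d (γ/2) (μ 1) : ℕ):ℝ)^2 + 2*((Phi d (γ/2) (μ 1) : ℕ):ℝ) := by
        unfold fPair
        push_cast
        ring
      nlinarith [(by positivity : (0:ℝ) ≤ ((Phi d (γ/2) (μ 1) : ℕ):ℝ))]
    have hPγ : (2:ℝ)^d * ((μ 1 : ℕ):ℝ) ≤ ((Phi d (γ/2) (μ 1) : ℕ):ℝ) * (γ/2) := hPhiLB (μ 1)
    have hg0μ1 : ((g 0 : ℕ):ℝ) ≤ ((μ 1 : ℕ):ℝ) := by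
      rw [hμ1]
      exact_mod_cast hfPair_ge (g 0)
    have hμ1ge : (4:ℝ) ≤ ((μ 1 : ℕ):ℝ) := by
      rw [hμ1]
      have h4 : 4 ≤ fPair (g 0) := by
        unfold fPair
        have h1 : 1 ≤ (g 0)^2 := Nat.one_le_pow 2 (g 0) hg0
        omega
      exact_mod_cast h4
    have hP0 : (0:ℝ) ≤ ((Phi d (γ/2) (μ 1) : ℕ):ℝ) := Nat.cast_nonneg _
    have h2dr : (2:ℝ) ≤ 2^d := by
      have hd1 : (1:ℝ) ≤ (d:ℝ) := by exact_mod_cast hd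
      nlinarith
    have hP1 : (1:ℝ) ≤ ((Phi d (γ/2) (μ 1) : ℕ):ℝ) := by
      nlinarith [mul_le_mul h2dr hμ1ge (by norm_num) (by positivity : (0:ℝ) ≤ (2:ℝ)^d),
        mul_le_mul_of_nonneg_left (le_of_lt (by linarith : γ/2 < (1:ℝ)/2)) hP0]
    rw [div_le_iff₀ (by positivity : (0:ℝ) < (M:ℝ)+1)]
    have hg00 : (0:ℝ) ≤ ((g 0 : ℕ):ℝ) := Nat.cast_nonneg _
    have hμ10 : (0:ℝ) ≤ ((μ 1 : ℕ):ℝ) := Nat.cast_nonneg _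
    nlinarith [mul_le_mul_of_nonneg_left h2P (by linarith : (0:ℝ) ≤ γ/4),
      mul_le_mul_of_nonneg_right hPγ hP0,
      mul_nonneg (mul_nonneg (by positivity : (0:ℝ) ≤ (2:ℝ)^d) hμ10)
        (by linarith : (0:ℝ) ≤ ((Phi d (γ/2) (μ 1) : ℕ):ℝ) - 1),
      mul_le_mul hcastd hg0μ1 hg00 (by positivity : (0:ℝ) ≤ (2:ℝ)^d)]
  -- A and B estimates in terms of erg
  have hAest : ∀ n i : ℕ, n ≤ i →
      ‖erg T x i‖ ≤ ‖erg T x n‖ + (d:ℝ) * n / ((i:ℝ)+1) := by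
    intro n i hni
    have hA := approx T hcomm hcontr n i hni x
    have h1 : ‖ops T i x‖ ≤ ‖ops T i (ops T n x)‖ + ‖ops T i x - ops T i (ops T n x)‖ := by
      have := norm_add_le (ops T i (ops T n x)) (ops T i x - ops T i (ops T n x))
      simpa using this
    have h2 : ‖ops T i (ops T n x)‖ ≤ ‖ops T n x‖ := ops_contr T hcontr i _
    have hd0 : (0:ℝ) ≤ (d:ℝ) * ((n:ℝ)/((i:ℝ)+1)) := by positivity
    have h3 : (d:ℝ) * ((n:ℝ)/((i:ℝ)+1)) * ‖x‖ ≤ (d:ℝ) * n / ((i:ℝ)+1) := by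
      have ha : (d:ℝ) * ((n:ℝ)/((i:ℝ)+1)) * ‖x‖ ≤ (d:ℝ) * ((n:ℝ)/((i:ℝ)+1)) * 1 :=
        mul_le_mul_of_nonneg_left hx hd0
      have hb : (d:ℝ) * ((n:ℝ)/((i:ℝ)+1)) * 1 = (d:ℝ) * n / ((i:ℝ)+1) := by ring
      linarith
    rw [erg_eq T x i, erg_eq T x n]
    linarith
  have hBest : ∀ i j M c : ℕ, i ≤ M → j ≤ M → i ≤ c → j ≤ c →
      ‖erg T x M‖ ≤ ‖(2:ℝ)⁻¹ • (erg T x i + erg T x j)‖ + (d:ℝ) * c / ((M:ℝ)+1) := by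
    intro i j M c hiM hjM hic hjc
    have hM1 : (0:ℝ) < (M:ℝ)+1 := by positivity
    have hbnd : ∀ p : ℕ, p ≤ c → p ≤ M →
        ‖ops T M x - ops T M (ops T p x)‖ ≤ (d:ℝ)*c/((M:ℝ)+1) := by
      intro p hpc hpM
      refine le_trans (approx T hcomm hcontr p M hpM x) ?_
      have h1 : ((p:ℝ)) ≤ (c:ℝ) := by exact_mod_cast hpc
      have hd0 : (0:ℝ) ≤ (d:ℝ) * ((p:ℝ)/((M:ℝ)+1)) := by positivity
      have ha : (d:ℝ) * ((p:ℝ)/((M:ℝ)+1)) * ‖x‖ ≤ (d:ℝ) * ((p:ℝ)/((M:ℝ)+1)) * 1 :=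
        mul_le_mul_of_nonneg_left hx hd0
      have hb : (d:ℝ) * ((p:ℝ)/((M:ℝ)+1)) * 1 = (d:ℝ) * p / ((M:ℝ)+1) := by ring
      have hc : (d:ℝ) * p / ((M:ℝ)+1) ≤ (d:ℝ) * c / ((M:ℝ)+1) := by gcongr
      linarith
    have hmix : ops T M x - ops T M ((2:ℝ)⁻¹ • (erg T x i + erg T x j))
        = (2:ℝ)⁻¹ • ((ops T M x - ops T M (ops T i x))
            + (ops T M x - ops T M (ops T j x))) := by
      rw [erg_eq T x i, erg_eq T x j, map_smul, map_add]
      module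
    have hnorm : ‖ops T M x - ops T M ((2:ℝ)⁻¹ • (erg T x i + erg T x j))‖
        ≤ (d:ℝ)*c/((M:ℝ)+1) := by
      rw [hmix, norm_smul]
      have hn2 : ‖(2:ℝ)⁻¹‖ = (2:ℝ)⁻¹ := by norm_num
      rw [hn2]
      have ht := norm_add_le (ops T M x - ops T M (ops T i x))
        (ops T M x - ops T M (ops T j x))
      have hb1 := hbnd i hic hiM
      have hb2 := hbnd j hjc hjM
      linarith
    calc ‖erg T x M‖ = ‖ops T M x‖ := by rw [erg_eq]
      _ ≤ ‖ops T M ((2:ℝ)⁻¹ • (erg T x i + erg T x j))‖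
          + ‖ops T M x - ops T M ((2:ℝ)⁻¹ • (erg T x i + erg T x j))‖ := by
          have := norm_add_le (ops T M ((2:ℝ)⁻¹ • (erg T x i + erg T x j)))
            (ops T M x - ops T M ((2:ℝ)⁻¹ • (erg T x i + erg T x j)))
          simpa using this
      _ ≤ ‖(2:ℝ)⁻¹ • (erg T x i + erg T x j)‖ + (d:ℝ)*c/((M:ℝ)+1) :=
          add_le_add (ops_contr T hcontr M _) hnorm
  -- the key one-step estimate
  have hstepEst : ∀ n M : ℕ, Phi d (γ/2) n ≤ Psi d γ g → hfun γ g d n ≤ M →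
      ‖erg T x M‖ < ‖erg T x n‖ - γ + γ/4 + (d:ℝ) * (hfun γ g d n) / ((M:ℝ)+1) := by
    intro n M hPsi' hM
    obtain ⟨i, j, hi1, hi2, hj1, hj2, hlt⟩ := hwit n hPsi'
    have hni : n ≤ i := le_trans (hφ_ge n) hi1
    have hiM : i ≤ M := le_trans hi2 hM
    have hjM : j ≤ M := le_trans hj2 hM
    have e1 := hAest n i hni
    have e2 := hE n i (le_trans hi1 (le_refl i))
    have e3 := hBest i j M (hfun γ g d n) hiM hjM hi2 hj2
    linarith
  -- minimizers
  have hmin : ∀ k : ℕ, ∃ n, n ≤ μ k ∧ ∀ m, m ≤ μ k → ‖erg T x n‖ ≤ ‖erg T x m‖ := by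
    intro k
    obtain ⟨b, hb, hbmin⟩ := Finset.exists_min_image (Finset.range (μ k + 1))
      (fun n => ‖erg T x n‖) ⟨0, by simp⟩
    refine ⟨b, ?_, fun m hm => hbmin m (Finset.mem_range.mpr (by omega))⟩
    have := Finset.mem_range.mp hb
    omega
  choose ν hν1 hν2 using hmin
  -- the drop estimate
  have hdrop : ∀ k, 1 ≤ k → k ≤ K →
      ‖erg T x (ν (k+1))‖ < ‖erg T x (ν k)‖ - γ/2 := by
    intro k hk1 hkK
    have hνk : ν k ≤ μ k := hν1 k
    have hPsiOK : Phi d (γ/2) (ν k) ≤ Psi d γ g := by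
      rw [hPsi]
      exact hφ_mono _ _ (le_trans hνk (hμmono hkK))
    have hfM : hfun γ g d (ν k) ≤ μ (k+1) :=
      le_trans (hfPair_ge _) (hsup _ k hνk)
    have hest := hstepEst (ν k) (μ (k+1)) hPsiOK hfM
    have hβ : (d:ℝ) * (hfun γ g d (ν k)) / ((μ (k+1) : ℝ)+1) ≤ γ/4 := by
      rcases Nat.eq_zero_or_pos (ν k) with h0 | h1
      · rw [h0, hfun0]
        exact hβ0 (μ (k+1)) (hμmono (by omega))
      · exact hβ1 (ν k) (μ (k+1)) h1 (hsup _ k hνk)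
    have hvk1 : ‖erg T x (ν (k+1))‖ ≤ ‖erg T x (μ (k+1))‖ :=
      hν2 (k+1) (μ (k+1)) (le_refl _)
    linarith
  -- numeric facts about K
  have hK1 : (1:ℝ) ≤ (K:ℝ) * (γ/2) := by
    have h1 : (1/(γ/2) : ℝ) ≤ (K:ℝ) := by rw [hK]; exact Nat.le_ceil _
    have h2 : (1:ℝ) = (1/(γ/2)) * (γ/2) := by field_simp
    rw [h2]
    exact mul_le_mul_of_nonneg_right h1 (le_of_lt hδpos)
  have hK3 : 3 ≤ K := by
    have h1 : (2:ℝ) < 1/(γ/2) := by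
      rw [lt_div_iff₀ hδpos]
      linarith
    have h2 : (2:ℕ) < K := by
      rw [hK]
      exact Nat.lt_ceil.mpr (by exact_mod_cast h1)
    omega
  -- the chain of decreasing minima
  have hchain : ∀ k, 2 ≤ k → k ≤ K →
      ‖erg T x (ν k)‖ < 1 + γ/2 - (k:ℝ) * (γ/2) := by
    intro k hk2
    induction k, hk2 using Nat.le_induction with
    | base =>
      intro _
      have hPsiOK : Phi d (γ/2) 0 ≤ Psi d γ g := by
        rw [hPhi0]
        exact Nat.zero_le _
      have hfM : hfun γ g d 0 ≤ μ 2 := by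
        rw [hfun0]
        calc g 0 ≤ fPair (g 0) := hfPair_ge _
          _ = μ 1 := hμ1.symm
          _ ≤ μ 2 := hμmono (by omega)
      have hest := hstepEst 0 (μ 2) hPsiOK hfM
      have hβ : (d:ℝ) * (hfun γ g d 0) / ((μ 2 : ℝ)+1) ≤ γ/4 := by
        rw [hfun0]
        exact hβ0 (μ 2) (le_refl _)
      have hv2 : ‖erg T x (ν 2)‖ ≤ ‖erg T x (μ 2)‖ := hν2 2 (μ 2) (le_refl _)
      have h01 : ‖erg T x 0‖ ≤ 1 := hnorm_le_one 0
      push_cast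
      linarith
    | succ k hk2 ih =>
      intro hkK
      have hkK' : k ≤ K := by omega
      have h1 := ih hkK'
      have h2 := hdrop k (by omega) hkK'
      push_cast
      push_cast at h1
      linarith
  -- final contradiction
  have hlast : ‖erg T x (ν K)‖ < γ/2 := by
    have h1 := hchain K (by omega) (le_refl K)
    linarith
  have hPsiOK : Phi d (γ/2) (ν K) ≤ Psi d γ g := by
    rw [hPsi]
    exact hφ_mono _ _ (hν1 K)
  obtain ⟨i, j, hi1, hi2, hj1, hj2, hlt⟩ := hwit (ν K) hPsiOK
  have hni : ν K ≤ i := le_trans (hφ_ge _) hi1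
  have e1 := hAest (ν K) i hni
  have e2 := hE (ν K) i hi1
  have hnn : (0:ℝ) ≤ ‖(2:ℝ)⁻¹ • (erg T x i + erg T x j)‖ := norm_nonneg _
  linarith
end
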